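/- On the ABHY hyperplane, two crossing chords cannot vanish simultaneously: assume the variables X_{ij} satisfy X_{ij} + X_{i+1,j+1} - X_{i+1,j} - X_{i,j+1} = c_{ij} with c_{ij} > 0 for all 1 ≤ i < j < n, and X_{ab} ≥ 0 for all planar chords. Then for cyclically ordered indices i < j < k < l, X_{jk} + X_{il} = X_{ik} + X_{jl} - Σ_{i≤a<j, k≤b<l} c_{ab}; consequently X_{ik} = 0 and X_{jl} = 0 cannot hold simultaneously. -/
import Mathlib

lemma tele_aux (f : ℕ → ℝ) (m n : ℕ) (h : m ≤ n) :
    ∑ a ∈ Finset.Ico m n, (f a - f (a + 1)) = f m - f n := by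
  induction n, h using Nat.le_induction with
  | base => simp
  | succ n hn ih => rw [Finset.sum_Ico_succ_top (by omega), ih]; ring

/-- On the ABHY hyperplane, two crossing chords cannot vanish simultaneously:
X_{jk} + X_{il} = X_{ik} + X_{jl} - Σ c_{ab}, hence X_{ik} = 0 and X_{jl} = 0 is impossible. -/
theorem stmt_16 (n : ℕ) (X c : ℕ → ℕ → ℝ)
    (hABHY : ∀ i j, 1 ≤ i → i < j → j < n →
      X i j + X (i + 1) (j + 1) - X (i + 1) j - X i (j + 1) = c i j)
    (hc : ∀ i j, 1 ≤ i → i < j → j < n → 0 < c i j)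
    (hX : ∀ a b, 1 ≤ a → a < b → b ≤ n → 0 ≤ X a b)
    (i j k l : ℕ) (hi : 1 ≤ i) (hij : i < j) (hjk : j < k) (hkl : k < l) (hln : l ≤ n) :
    (X j k + X i l =
      X i k + X j l - ∑ a ∈ Finset.Ico i j, ∑ b ∈ Finset.Ico k l, c a b) ∧
    ¬(X i k = 0 ∧ X j l = 0) := by
  have hsum : ∑ a ∈ Finset.Ico i j, ∑ b ∈ Finset.Ico k l, c a b
      = (X i k - X j k) - (X i l - X j l) := by
    have h1 : ∀ a ∈ Finset.Ico i j, ∑ b ∈ Finset.Ico k l, c a b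
        = (X a k - X (a + 1) k) - (X a l - X (a + 1) l) := by
      intro a ha
      simp only [Finset.mem_Ico] at ha
      have h2 : ∀ b ∈ Finset.Ico k l, c a b
          = ((X a b - X a (b + 1)) - (X (a + 1) b - X (a + 1) (b + 1))) := by
        intro b hb
        simp only [Finset.mem_Ico] at hb
        have := hABHY a b (by omega) (by omega) (by omega)
        linarith
      rw [Finset.sum_congr rfl h2, Finset.sum_sub_distrib,
        tele_aux (fun b => X a b) k l (by omega),
        tele_aux (fun b => X (a + 1) b) k l (by omega)]
      ring
    rw [Finset.sum_congr rfl h1, Finset.sum_sub_distrib,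
      tele_aux (fun a => X a k) i j (by omega),
      tele_aux (fun a => X a l) i j (by omega)]
  have heq : X j k + X i l = X i k + X j l
      - ∑ a ∈ Finset.Ico i j, ∑ b ∈ Finset.Ico k l, c a b := by
    rw [hsum]; ring
  refine ⟨heq, fun ⟨h1, h2⟩ => ?_⟩
  have hpos : 0 < ∑ a ∈ Finset.Ico i j, ∑ b ∈ Finset.Ico k l, c a b := by
    apply Finset.sum_pos
    · intro a ha
      simp only [Finset.mem_Ico] at ha
      apply Finset.sum_pos
      · intro b hb
        simp only [Finset.mem_Ico] at hb
        exact hc a b (by omega) (by omega) (by omega)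
      · exact ⟨k, Finset.mem_Ico.2 ⟨le_refl k, hkl⟩⟩
    · exact ⟨i, Finset.mem_Ico.2 ⟨le_refl i, hij⟩⟩
  have hjk' := hX j k (by omega) hjk (by omega)
  have hil' := hX i l hi (by omega) hln
  rw [h1, h2] at heq
  linarith
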